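/- (Equivalence of Problem (SPP) and formulation (SPP-F2).) With the subdivision setup, D(x_s,x_t) equals the optimal value of the following mixed-integer program (SPP-F2) in the variables d_i ≥ 0 (i ∈ V), z_{ij} ∈ {0,1} ((i,j) ∈ A), λ_{ije} ≥ 0 ((i,j) ∈ A, e ∈ Ext(F_{ij})), ρ_{hij} ≥ 0 (i ∈ V∖{s,t}, (h,i),(i,j) ∈ A), Φ_{hije} ≥ 0 (i ∈ V∖{s,t}, (h,i),(i,j) ∈ A, e ∈ Ext(F_{hi})), Ψ_{hije} ≥ 0 (i ∈ V∖{s,t}, (h,i),(i,j) ∈ A, e ∈ Ext(F_{ij})): minimize Σ_{i∈V} ω_i d_i subject to: Σ_{(s,j)∈A} z_{sj} − Σ_{(h,s)∈A} z_{hs} = 1; Σ_{(i,j)∈A} z_{ij} − Σ_{(h,i)∈A} z_{hi} = 0 for all i ∈ V∖{s,t}; Σ_{(t,j)∈A} z_{tj} − Σ_{(h,t)∈A} z_{ht} = −1; Σ_{(h,i)∈A} z_{hi} ≤ 1 and Σ_{(i,j)∈A} z_{ij} ≤ 1 for all i ∈ V; d_s ≥ Σ_{(s,j)∈A} ‖Σ_{e∈Ext(F_{sj})}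 λ_{sje} e − x_s z_{sj}‖_{p_s}; d_i ≥ Σ_{(h,i)∈A} Σ_{(i,j)∈A} ‖Σ_{e∈Ext(F_{ij})} Ψ_{hije} e − Σ_{e∈Ext(F_{hi})} Φ_{hije} e‖_{p_i} for all i ∈ V∖{s,t}; d_t ≥ Σ_{(h,t)∈A} ‖x_t z_{ht} − Σ_{e∈Ext(F_{ht})} λ_{hte} e‖_{p_t}; Σ_{e∈Ext(F_{ij})} λ_{ije} = z_{ij} for all (i,j) ∈ A; Σ_{(i,j)∈A} ρ_{hij} = z_{hi} for all i ∈ V∖{s,t}, (h,i) ∈ A; Σ_{(h,i)∈A} ρ_{hij} = z_{ij} for all i ∈ V∖{s,t}, (i,j) ∈ A; Σ_{e∈Ext(F_{hi})} Φ_{hije} = ρ_{hij} and Σ_{e∈Ext(F_{ij})} Ψ_{hije} = ρ_{hij} for all i ∈ V∖{s,t}, (h,i),(i,j) ∈ A; Σ_{(i,j)∈A} Φ_{hije} = λ_{hie} for all i ∈ V∖{s,t}, (h,i) ∈ A, e ∈ Ext(F_{hi}); and Σ_{(h,i)∈A} Ψ_{hije} = λ_{ije} for all i ∈ V∖{s,t},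 (i,j) ∈ A, e ∈ Ext(F_{ij}). -/

import Mathlib

open scoped BigOperators ENNReal

attribute [local instance] Classical.propDecidable

/-- The ℓ_p norm on ℝ^d for an extended-real exponent `p` (with `‖x‖_∞ = max_k |x_k|`). -/
noncomputable def lpnorm {d : ℕ} (p : ℝ≥0∞) (x : Fin d → ℝ) : ℝ :=
  if p = ∞ then ⨆ k, |x k| else (∑ k, |x k| ^ p.toReal) ^ (1 / p.toReal)

/-- Out-neighbours of `i` in the adjacency relation `Adj`. -/
noncomputable def outN {m : ℕ} (Adj : Fin m → Fin m → Prop) (i : Fin m) : Finset (Fin m) :=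
  Finset.univ.filter (fun j => Adj i j)

/-- In-neighbours of `i` in the adjacency relation `Adj`. -/
noncomputable def inN {m : ℕ} (Adj : Fin m → Fin m → Prop) (i : Fin m) : Finset (Fin m) :=
  Finset.univ.filter (fun h => Adj h i)

section Defs

variable {d m : ℕ} (P : Fin m → Set (Fin d → ℝ)) (p : Fin m → ℝ≥0∞) (ω : Fin m → ℝ)
  (ExtF : Fin m → Fin m → Finset (Fin d → ℝ))
  (Adj : Fin m → Fin m → Prop) (s t : Fin m) (xs xt : Fin d → ℝ)

def PathFeas (r : ℝ) : Prop :=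
  ∃ (n : ℕ) (γ : Fin (n + 2) → Fin m) (y : Fin (n + 1) → (Fin d → ℝ)),
    γ 0 = s ∧ γ (Fin.last (n + 1)) = t ∧ Function.Injective γ ∧
    (∀ l : Fin (n + 1), Adj (γ l.castSucc) (γ l.succ)) ∧
    (∀ l : Fin (n + 1), y l ∈ P (γ l.castSucc) ∩ P (γ l.succ)) ∧
    r = ω s * lpnorm (p s) (y 0 - xs)
        + (∑ l : Fin n, ω (γ l.succ.castSucc) *
            lpnorm (p (γ l.succ.castSucc)) (y l.succ - y l.castSucc))
        + ω t * lpnorm (p t) (xt - y (Fin.last n))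

def MIPFeas (r : ℝ) : Prop :=
  ∃ (dv : Fin m → ℝ) (z : Fin m → Fin m → ℝ)
    (lam : Fin m → Fin m → (Fin d → ℝ) → ℝ)
    (ρ : Fin m → Fin m → Fin m → ℝ)
    (Φ : Fin m → Fin m → Fin m → (Fin d → ℝ) → ℝ)
    (Ψ : Fin m → Fin m → Fin m → (Fin d → ℝ) → ℝ),
    (∀ i, 0 ≤ dv i) ∧
    (∀ i j, Adj i j → (z i j = 0 ∨ z i j = 1)) ∧
    (∀ i j, Adj i j → ∀ e ∈ ExtF i j, 0 ≤ lam i j e) ∧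
    (∀ i, i ≠ s → i ≠ t → ∀ h j, Adj h i → Adj i j → 0 ≤ ρ h i j) ∧
    (∀ i, i ≠ s → i ≠ t → ∀ h j, Adj h i → Adj i j →
      ∀ e ∈ ExtF h i, 0 ≤ Φ h i j e) ∧
    (∀ i, i ≠ s → i ≠ t → ∀ h j, Adj h i → Adj i j →
      ∀ e ∈ ExtF i j, 0 ≤ Ψ h i j e) ∧
    ((∑ j ∈ outN Adj s, z s j) - (∑ h ∈ inN Adj s, z h s) = 1) ∧
    (∀ i, i ≠ s → i ≠ t →
      (∑ j ∈ outN Adj i, z i j) - (∑ h ∈ inN Adj i, z h i) = 0) ∧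
    ((∑ j ∈ outN Adj t, z t j) - (∑ h ∈ inN Adj t, z h t) = -1) ∧
    (∀ i, (∑ h ∈ inN Adj i, z h i) ≤ 1) ∧
    (∀ i, (∑ j ∈ outN Adj i, z i j) ≤ 1) ∧
    ((∑ j ∈ outN Adj s,
        lpnorm (p s) ((∑ e ∈ ExtF s j, lam s j e • e) - z s j • xs)) ≤ dv s) ∧
    (∀ i, i ≠ s → i ≠ t →
      (∑ h ∈ inN Adj i, ∑ j ∈ outN Adj i,
        lpnorm (p i) ((∑ e ∈ ExtF i j, Ψ h i j e • e)
          - (∑ e ∈ ExtF h i, Φ h i j e • e))) ≤ dv i) ∧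
    ((∑ h ∈ inN Adj t,
        lpnorm (p t) (z h t • xt - (∑ e ∈ ExtF h t, lam h t e • e))) ≤ dv t) ∧
    (∀ i j, Adj i j → (∑ e ∈ ExtF i j, lam i j e) = z i j) ∧
    (∀ i, i ≠ s → i ≠ t → ∀ h, Adj h i →
      (∑ j ∈ outN Adj i, ρ h i j) = z h i) ∧
    (∀ i, i ≠ s → i ≠ t → ∀ j, Adj i j →
      (∑ h ∈ inN Adj i, ρ h i j) = z i j) ∧
    (∀ i, i ≠ s → i ≠ t → ∀ h j, Adj h i → Adj i j →
      (∑ e ∈ ExtF h i, Φ h i j e) = ρ h i j) ∧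
    (∀ i, i ≠ s → i ≠ t → ∀ h, Adj h i → ∀ e ∈ ExtF h i,
      (∑ j ∈ outN Adj i, Φ h i j e) = lam h i e) ∧
    (∀ i, i ≠ s → i ≠ t → ∀ h j, Adj h i → Adj i j →
      (∑ e ∈ ExtF i j, Ψ h i j e) = ρ h i j) ∧
    (∀ i, i ≠ s → i ≠ t → ∀ j, Adj i j → ∀ e ∈ ExtF i j,
      (∑ h ∈ inN Adj i, Ψ h i j e) = lam i j e) ∧
    r = ∑ i, ω i * dv i

end Defs

lemma lpnorm_eq_norm {d : ℕ} (p : ℝ≥0∞) (hp : 1 ≤ p) (x : Fin d → ℝ) :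
    lpnorm p x = ‖(WithLp.equiv p (Fin d → ℝ)).symm x‖ := by
  unfold lpnorm
  by_cases h : p = ∞
  · subst h
    simp only [if_pos rfl]
    rw [PiLp.norm_eq_ciSup]
    simp [WithLp.equiv_symm_apply, PiLp.toLp_apply, Real.norm_eq_abs]
  · rw [if_neg h, PiLp.norm_eq_sum]
    · simp [WithLp.equiv_symm_apply, PiLp.toLp_apply, Real.norm_eq_abs]
    · exact ENNReal.toReal_pos (by intro h0; rw [h0] at hp; simp at hp) h

lemma lpnorm_nonneg {d : ℕ} (p : ℝ≥0∞) (hp : 1 ≤ p) (x : Fin d → ℝ) : 0 ≤ lpnorm p x := by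
  haveI : Fact (1 ≤ p) := ⟨hp⟩
  rw [lpnorm_eq_norm p hp]; exact norm_nonneg _

lemma lpnorm_sum_le {d : ℕ} (p : ℝ≥0∞) (hp : 1 ≤ p) {ι : Type*} (s : Finset ι)
    (f : ι → (Fin d → ℝ)) : lpnorm p (∑ i ∈ s, f i) ≤ ∑ i ∈ s, lpnorm p (f i) := by
  haveI : Fact (1 ≤ p) := ⟨hp⟩
  simp only [lpnorm_eq_norm p hp]
  rw [show (WithLp.equiv p (Fin d → ℝ)).symm (∑ i ∈ s, f i)
      = ∑ i ∈ s, (WithLp.equiv p (Fin d → ℝ)).symm (f i) by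
    simp [WithLp.equiv]]
  exact norm_sum_le _ _

lemma lpnorm_zero {d : ℕ} (p : ℝ≥0∞) (hp : 1 ≤ p) : lpnorm p (0 : Fin d → ℝ) = 0 := by
  haveI : Fact (1 ≤ p) := ⟨hp⟩
  rw [lpnorm_eq_norm p hp]
  rw [show (WithLp.equiv p (Fin d → ℝ)).symm 0 = 0 from rfl]
  exact norm_zero
attribute [local instance] Classical.propDecidable
lemma sum01_nonneg {ι : Type*} {s : Finset ι} {f : ι → ℝ}
    (h01 : ∀ i ∈ s, f i = 0 ∨ f i = 1) : ∀ i ∈ s, 0 ≤ f i := by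
  intro i hi; rcases h01 i hi with h | h <;> rw [h] <;> norm_num

lemma sum01_exists_one {ι : Type*} {s : Finset ι} {f : ι → ℝ}
    (h01 : ∀ i ∈ s, f i = 0 ∨ f i = 1) (hsum : ∑ i ∈ s, f i = 1) :
    ∃ j ∈ s, f j = 1 := by
  by_contra hc
  push_neg at hc
  have : ∑ i ∈ s, f i = 0 := Finset.sum_eq_zero (fun i hi =>
    (h01 i hi).resolve_right (hc i hi))
  rw [this] at hsum; norm_num at hsum

lemma sum01_eq_one {ι : Type*} {s : Finset ι} {f : ι → ℝ}
    (h01 : ∀ i ∈ s, f i = 0 ∨ f i = 1) (hle : ∑ i ∈ s, f i ≤ 1)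
    {j : ι} (hj : j ∈ s) (hfj : f j = 1) : ∑ i ∈ s, f i = 1 := by
  refine le_antisymm hle ?_
  calc (1:ℝ) = f j := hfj.symm
    _ ≤ ∑ i ∈ s, f i := Finset.single_le_sum (sum01_nonneg h01) hj

lemma sum01_others_zero {ι : Type*} {s : Finset ι} {f : ι → ℝ}
    (h01 : ∀ i ∈ s, f i = 0 ∨ f i = 1) (hle : ∑ i ∈ s, f i ≤ 1)
    {j : ι} (hj : j ∈ s) (hfj : f j = 1) :
    ∀ j' ∈ s, j' ≠ j → f j' = 0 := by
  intro j' hj' hne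
  have hsplit : f j + ∑ i ∈ s.erase j, f i = ∑ i ∈ s, f i :=
    Finset.add_sum_erase s f hj
  have hz : ∑ i ∈ s.erase j, f i = 0 := by
    have h1 : ∑ i ∈ s.erase j, f i ≤ 0 := by
      have := hsplit; rw [hfj] at this; linarith
    have h2 : 0 ≤ ∑ i ∈ s.erase j, f i :=
      Finset.sum_nonneg (fun i hi => sum01_nonneg h01 i (Finset.mem_of_mem_erase hi))
    linarith
  exact (Finset.sum_eq_zero_iff_of_nonneg
    (fun i hi => sum01_nonneg h01 i (Finset.mem_of_mem_erase hi))).1 hz j'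
    (Finset.mem_erase.2 ⟨hne, hj'⟩)

lemma sum01_unique {ι : Type*} {s : Finset ι} {f : ι → ℝ}
    (h01 : ∀ i ∈ s, f i = 0 ∨ f i = 1) (hle : ∑ i ∈ s, f i ≤ 1)
    {j j' : ι} (hj : j ∈ s) (hfj : f j = 1) (hj' : j' ∈ s) (hfj' : f j' = 1) :
    j = j' := by
  by_contra hne
  have := sum01_others_zero h01 hle hj' hfj' j hj hne
  rw [this] at hfj; norm_num at hfj
open scoped BigOperators

section PathLemma
variable {m : ℕ} (N : Fin m → Fin m → Prop) (s t : Fin m)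

/-- Conclusion: a simple N-path from s to t. -/
def PathConcl : Prop :=
  ∃ (n : ℕ) (γ : Fin (n + 2) → Fin m), γ 0 = s ∧ γ (Fin.last (n + 1)) = t ∧
    Function.Injective γ ∧ ∀ l : Fin (n + 1), N (γ l.castSucc) (γ l.succ)

lemma walk_done (hst : s ≠ t) {j : ℕ} (γ : Fin (j + 1) → Fin m)
    (h0 : γ 0 = s) (hinj : Function.Injective γ)
    (hstep : ∀ l : Fin j, N (γ l.castSucc) (γ l.succ))
    (hlast : γ (Fin.last j) = t) : PathConcl N s t := by
  obtain ⟨n, rfl⟩ : ∃ n, j = n + 1 := by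
    cases j with
    | zero => exact absurd (h0 ▸ hlast ▸ rfl : s = t) hst
    | succ n => exact ⟨n, rfl⟩
  exact ⟨n, γ, h0, hlast, hinj, hstep⟩

lemma walk_to_path (hst : s ≠ t)
    (hNs : ∀ h, ¬ N h s)
    (hsout : ∃ j, N s j)
    (hout_unique : ∀ i j j', N i j → N i j' → j = j')
    (hin_unique : ∀ h h' i, N h i → N h' i → h = h')
    (htout : ∀ j, ¬ N t j)
    (hmid : ∀ i, i ≠ s → i ≠ t → (∃ h, N h i) → ∃ j, N i j) :
    ∀ (K j : ℕ) (γ : Fin (j + 1) → Fin m), m ≤ j + 1 + K → γ 0 = s →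
      Function.Injective γ → (∀ l : Fin j, N (γ l.castSucc) (γ l.succ)) →
      PathConcl N s t := by
  intro K
  induction K with
  | zero =>
    intro j γ hcard h0 hinj hstep
    -- γ is surjective
    have hle : j + 1 ≤ m := by
      simpa using Fintype.card_le_of_injective γ hinj
    have hbij : Function.Bijective γ := by
      have : Fintype.card (Fin (j+1)) = Fintype.card (Fin m) := by simp; omega
      exact (Fintype.bijective_iff_injective_and_card γ).2 ⟨hinj, this⟩
    obtain ⟨l, hl⟩ := hbij.2 t
    have hl' : l = Fin.last j := by
      by_contra hne
      obtain ⟨r, hr⟩ := Fin.exists_castSucc_eq.2 hne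
      exact htout _ (by rw [← hl, ← hr]; exact hstep r)
    exact walk_done N s t hst γ h0 hinj hstep (by rw [← hl', hl])
  | succ K ih =>
    intro j γ hcard h0 hinj hstep
    by_cases hlast : γ (Fin.last j) = t
    · exact walk_done N s t hst γ h0 hinj hstep hlast
    · set c := γ (Fin.last j) with hc
      -- c has an out-neighbour
      have hcout : ∃ j', N c j' := by
        rcases Nat.eq_zero_or_pos j with rfl | hj
        · have : c = s := by rw [hc]; exact h0
          exact this ▸ hsout
        · -- c ≠ s since last ≠ 0
          have hcs : c ≠ s := by
            intro hcs
            have : Fin.last j = 0 := hinj (by rw [← h0] at hcs; exact hcs)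
            simp [Fin.ext_iff] at this; omega
          obtain ⟨r, rfl⟩ : ∃ r : ℕ, j = r + 1 := ⟨j - 1, by omega⟩
          refine hmid c hcs hlast ⟨γ (Fin.last r).castSucc, ?_⟩
          have := hstep (Fin.last r)
          rwa [Fin.succ_last] at this
      obtain ⟨b, hb⟩ := hcout
      -- b is not in the range of γ
      have hbs : b ≠ s := fun h => hNs c (h ▸ hb)
      have hbnot : ∀ l : Fin (j + 1), γ l ≠ b := by
        intro l hlb
        have hl0 : l ≠ 0 := fun h => hbs (by rw [← hlb, h, h0])
        obtain ⟨r, hr⟩ := Fin.exists_succ_eq.2 hl0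
        have hNr : N (γ r.castSucc) b := by rw [← hlb, ← hr]; exact hstep r
        have : γ r.castSucc = c := hin_unique _ _ _ hNr hb
        have heq : r.castSucc = Fin.last j := hinj this
        exact absurd heq (ne_of_lt (Fin.castSucc_lt_last r))
      -- extend the walk by b
      refine ih (j + 1) (Fin.snoc γ b) (by omega) ?_ ?_ ?_
      · have : ((0 : Fin (j+1)).castSucc : Fin (j+2)) = 0 := by
          simp
        rw [← this, Fin.snoc_castSucc, h0]
      · intro a a' haa
        induction a using Fin.lastCases with
        | last =>
          induction a' using Fin.lastCases with
          | last => rfl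
          | cast r' =>
            rw [Fin.snoc_last, Fin.snoc_castSucc] at haa
            exact absurd haa.symm (hbnot _)
        | cast r =>
          induction a' using Fin.lastCases with
          | last =>
            rw [Fin.snoc_last, Fin.snoc_castSucc] at haa
            exact absurd haa (hbnot _)
          | cast r' =>
            rw [Fin.snoc_castSucc, Fin.snoc_castSucc] at haa
            rw [hinj haa]
      · intro l
        induction l using Fin.lastCases with
        | last =>
          rw [Fin.succ_last, Fin.snoc_last, Fin.snoc_castSucc]
          exact hb
        | cast r =>
          rw [Fin.succ_castSucc, Fin.snoc_castSucc, Fin.snoc_castSucc]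
          exact hstep r

lemma path_exists (hst : s ≠ t)
    (hNs : ∀ h, ¬ N h s)
    (hsout : ∃ j, N s j)
    (hout_unique : ∀ i j j', N i j → N i j' → j = j')
    (hin_unique : ∀ h h' i, N h i → N h' i → h = h')
    (htout : ∀ j, ¬ N t j)
    (hmid : ∀ i, i ≠ s → i ≠ t → (∃ h, N h i) → ∃ j, N i j) :
    PathConcl N s t := by
  refine walk_to_path N s t hst hNs hsout hout_unique hin_unique htout hmid
    m 0 (fun _ => s) (by omega) rfl (fun a a' _ => by omega)
    (fun l => l.elim0)
end PathLemma

lemma sInf_eq_of_mutual {A B : Set ℝ} (hA0 : ∀ r ∈ A, 0 ≤ r) (hB0 : ∀ r ∈ B, 0 ≤ r)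
    (hAB : ∀ r ∈ A, ∃ r' ∈ B, r' ≤ r) (hBA : ∀ r ∈ B, ∃ r' ∈ A, r' ≤ r) :
    sInf A = sInf B := by
  rcases A.eq_empty_or_nonempty with hA | hA
  · have hB : B = ∅ := by
      rcases B.eq_empty_or_nonempty with hB | ⟨r, hr⟩
      · exact hB
      · obtain ⟨r', hr', -⟩ := hBA r hr
        rw [hA] at hr'; exact absurd hr' (Set.notMem_empty r')
    rw [hA, hB]
  · obtain ⟨a, ha⟩ := hA
    obtain ⟨b, hb, -⟩ := hAB a ha
    refine le_antisymm ?_ ?_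
    · refine le_csInf ⟨b, hb⟩ (fun r hr => ?_)
      obtain ⟨r', hr', hle⟩ := hBA r hr
      exact (csInf_le ⟨0, fun x hx => hA0 x hx⟩ hr').trans hle
    · refine le_csInf ⟨a, ha⟩ (fun r hr => ?_)
      obtain ⟨r', hr', hle⟩ := hAB r hr
      exact (csInf_le ⟨0, fun x hx => hB0 x hx⟩ hr').trans hle

section Main

variable {d m : ℕ} {P : Fin m → Set (Fin d → ℝ)} {p : Fin m → ℝ≥0∞} {ω : Fin m → ℝ}
  {ExtF : Fin m → Fin m → Finset (Fin d → ℝ)}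
  {Adj : Fin m → Fin m → Prop} {s t : Fin m} {xs xt : Fin d → ℝ}

lemma pathFeas_nonneg (hp : ∀ i, 1 ≤ p i) (hω : ∀ i, 0 < ω i) {r : ℝ}
    (hr : PathFeas P p ω Adj s t xs xt r) : 0 ≤ r := by
  obtain ⟨n, γ, y, -, -, -, -, -, rfl⟩ := hr
  have h1 : (0:ℝ) ≤ ω s * lpnorm (p s) (y 0 - xs) :=
    mul_nonneg (hω s).le (lpnorm_nonneg _ (hp s) _)
  have h2 : (0:ℝ) ≤ ∑ l : Fin n, ω (γ l.succ.castSucc) *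
      lpnorm (p (γ l.succ.castSucc)) (y l.succ - y l.castSucc) :=
    Finset.sum_nonneg fun l _ => mul_nonneg (hω _).le (lpnorm_nonneg _ (hp _) _)
  have h3 : (0:ℝ) ≤ ω t * lpnorm (p t) (xt - y (Fin.last n)) :=
    mul_nonneg (hω t).le (lpnorm_nonneg _ (hp t) _)
  linarith

lemma mipFeas_nonneg (hω : ∀ i, 0 < ω i) {r : ℝ}
    (hr : MIPFeas p ω ExtF Adj s t xs xt r) : 0 ≤ r := by
  obtain ⟨dv, z, lam, ρ, Φ, Ψ, hdv, hrest⟩ := hr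
  obtain ⟨-,-,-,-,-,-,-,-,-,-,-,-,-,-,-,-,-,-,-,-,rfl⟩ := hrest
  exact Finset.sum_nonneg fun i _ => mul_nonneg (hω i).le (hdv i)




noncomputable def fZ {m : ℕ} (n : ℕ) (γ : Fin (n + 2) → Fin m) (i j : Fin m) : ℝ :=
  ∑ l : Fin (n + 1), if γ l.castSucc = i ∧ γ l.succ = j then 1 else 0

noncomputable def fLam {d m : ℕ} (n : ℕ) (γ : Fin (n + 2) → Fin m)
    (W : Fin (n + 1) → (Fin d → ℝ) → ℝ) (i j : Fin m) (e : Fin d → ℝ) : ℝ :=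
  ∑ l : Fin (n + 1), if γ l.castSucc = i ∧ γ l.succ = j then W l e else 0

section FZ
variable {d m n : ℕ} {γ : Fin (n + 2) → Fin m} {W : Fin (n + 1) → (Fin d → ℝ) → ℝ}
  (hinj : Function.Injective γ)
include hinj

lemma cond_iff (l₀ : Fin (n + 1)) :
    ∀ l, (γ l.castSucc = γ l₀.castSucc ∧ γ l.succ = γ l₀.succ) ↔ l = l₀ := by
  intro l
  constructor
  · rintro ⟨h1, -⟩
    exact Fin.castSucc_injective _ (hinj h1)
  · rintro rfl; exact ⟨rfl, rfl⟩

lemma fZ_arc (l₀ : Fin (n + 1)) : fZ n γ (γ l₀.castSucc) (γ l₀.succ) = 1 := by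
  unfold fZ
  simp only [cond_iff hinj l₀]
  rw [Finset.sum_ite_eq' Finset.univ l₀ (fun _ => (1:ℝ))]
  simp

lemma fLam_arc (l₀ : Fin (n + 1)) (e : Fin d → ℝ) :
    fLam n γ W (γ l₀.castSucc) (γ l₀.succ) e = W l₀ e := by
  unfold fLam
  simp only [cond_iff hinj l₀]
  rw [Finset.sum_ite_eq' Finset.univ l₀ (fun l => W l e)]
  simp

omit hinj in
lemma fZ_off {i j : Fin m} (h : ∀ l : Fin (n + 1), ¬(γ l.castSucc = i ∧ γ l.succ = j)) :
    fZ n γ i j = 0 :=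
  Finset.sum_eq_zero (fun l _ => if_neg (h l))

omit hinj in
lemma fLam_off {i j : Fin m} (h : ∀ l : Fin (n + 1), ¬(γ l.castSucc = i ∧ γ l.succ = j))
    (e : Fin d → ℝ) : fLam n γ W i j e = 0 :=
  Finset.sum_eq_zero (fun l _ => if_neg (h l))

lemma fZ_cases (i j : Fin m) :
    (fZ n γ i j = 1 ∧ ∃ l : Fin (n + 1), γ l.castSucc = i ∧ γ l.succ = j)
    ∨ (fZ n γ i j = 0 ∧ ∀ l : Fin (n + 1), ¬(γ l.castSucc = i ∧ γ l.succ = j)) := by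
  by_cases h : ∃ l : Fin (n + 1), γ l.castSucc = i ∧ γ l.succ = j
  · obtain ⟨l, h1, h2⟩ := h
    exact Or.inl ⟨by rw [← h1, ← h2]; exact fZ_arc hinj l, l, h1, h2⟩
  · push_neg at h
    exact Or.inr ⟨fZ_off (by intro l hc; exact (h l hc.1) hc.2), by
      intro l hc; exact (h l hc.1) hc.2⟩

lemma fZ_01 (i j : Fin m) : fZ n γ i j = 0 ∨ fZ n γ i j = 1 := by
  rcases fZ_cases hinj i j with ⟨h, -⟩ | ⟨h, -⟩
  · exact Or.inr h
  · exact Or.inl h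

lemma fZ_nonneg (i j : Fin m) : 0 ≤ fZ n γ i j := by
  rcases fZ_01 hinj i j with h | h <;> rw [h] <;> norm_num

lemma fLam_zero_of_fZ {i j : Fin m} (h : fZ n γ i j = 0) (e : Fin d → ℝ) :
    fLam n γ W i j e = 0 := by
  rcases fZ_cases hinj i j with ⟨h1, -⟩ | ⟨-, h2⟩
  · rw [h] at h1; norm_num at h1
  · exact fLam_off h2 e

end FZ


noncomputable def fDv {d m : ℕ} (n : ℕ) (γ : Fin (n + 2) → Fin m)
    (W : Fin (n + 1) → (Fin d → ℝ) → ℝ) (p : Fin m → ℝ≥0∞)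
    (Adj : Fin m → Fin m → Prop) (ExtF : Fin m → Fin m → Finset (Fin d → ℝ))
    (s t : Fin m) (xs xt : Fin d → ℝ) (i : Fin m) : ℝ :=
  if i = s then ∑ j ∈ outN Adj s,
      lpnorm (p s) ((∑ e ∈ ExtF s j, fLam n γ W s j e • e) - fZ n γ s j • xs)
  else if i = t then ∑ h ∈ inN Adj t,
      lpnorm (p t) (fZ n γ h t • xt - ∑ e ∈ ExtF h t, fLam n γ W h t e • e)
  else ∑ h ∈ inN Adj i, ∑ j ∈ outN Adj i,
      lpnorm (p i) ((∑ e ∈ ExtF i j, (fZ n γ h i * fLam n γ W i j e) • e)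
        - (∑ e ∈ ExtF h i, (fLam n γ W h i e * fZ n γ i j) • e))


lemma forward
    (hFpoly : ∀ i j, i ≠ j → P i ∩ P j = convexHull ℝ (ExtF i j : Set (Fin d → ℝ)))
    (hp : ∀ i, 1 ≤ p i) (hω : ∀ i, 0 < ω i)
    (hAdj : ∀ i j, Adj i j ↔ i ≠ j ∧ (P i ∩ P j).Nonempty)
    (hst : s ≠ t) {r : ℝ}
    (hr : PathFeas P p ω Adj s t xs xt r) : MIPFeas p ω ExtF Adj s t xs xt r := by
  obtain ⟨n, γ, y, h0, hlast, hinj, hstep, hmem, rfl⟩ := hr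
  have hne : ∀ l : Fin (n + 1), γ l.castSucc ≠ γ l.succ :=
    fun l => ((hAdj _ _).1 (hstep l)).1
  -- convex representation of the gates
  have hrep : ∀ l : Fin (n + 1), ∃ w : (Fin d → ℝ) → ℝ,
      (∀ e ∈ ExtF (γ l.castSucc) (γ l.succ), 0 ≤ w e) ∧
      (∑ e ∈ ExtF (γ l.castSucc) (γ l.succ), w e = 1) ∧
      (∑ e ∈ ExtF (γ l.castSucc) (γ l.succ), w e • e = y l) := by
    intro l
    have hy := hmem l
    rw [hFpoly _ _ (hne l)] at hy
    obtain ⟨w, hw1, hw2, hw3⟩ := Finset.mem_convexHull.1 hy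
    refine ⟨w, hw1, hw2, ?_⟩
    rw [Finset.centerMass_eq_of_sum_1 _ id hw2] at hw3
    simpa using hw3
  choose W hW1 hW2 hW3 using hrep
  -- degree computations
  have houtsum : ∀ i, (∑ j ∈ outN Adj i, fZ n γ i j)
      = if ∃ lr : Fin (n + 1), γ lr.castSucc = i then 1 else 0 := by
    intro i
    by_cases hex : ∃ lr : Fin (n + 1), γ lr.castSucc = i
    · obtain ⟨lr, hlr⟩ := hex
      rw [if_pos ⟨lr, hlr⟩]
      have hz : ∀ j, fZ n γ i j = if j = γ lr.succ then 1 else 0 := by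
        intro j
        by_cases hj : j = γ lr.succ
        · rw [if_pos hj, hj, ← hlr, fZ_arc hinj]
        · rw [if_neg hj]
          refine fZ_off ?_
          rintro l ⟨hc1, hc2⟩
          have hl : l = lr := Fin.castSucc_injective _ (hinj (by rw [hc1, hlr]))
          exact hj (by rw [← hc2, hl])
      rw [Finset.sum_congr rfl (fun j _ => hz j),
        Finset.sum_ite_eq' (outN Adj i) (γ lr.succ) (fun _ => (1:ℝ)), if_pos]
      exact Finset.mem_filter.2 ⟨Finset.mem_univ _, by rw [← hlr]; exact hstep lr⟩
    · rw [if_neg hex]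
      refine Finset.sum_eq_zero (fun j _ => fZ_off ?_)
      rintro l ⟨hc1, -⟩
      exact hex ⟨l, hc1⟩
  have hinsum : ∀ i, (∑ h ∈ inN Adj i, fZ n γ h i)
      = if ∃ lr : Fin (n + 1), γ lr.succ = i then 1 else 0 := by
    intro i
    by_cases hex : ∃ lr : Fin (n + 1), γ lr.succ = i
    · obtain ⟨lr, hlr⟩ := hex
      rw [if_pos ⟨lr, hlr⟩]
      have hz : ∀ h, fZ n γ h i = if h = γ lr.castSucc then 1 else 0 := by
        intro h
        by_cases hh : h = γ lr.castSucc
        · rw [if_pos hh, hh, ← hlr, fZ_arc hinj]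
        · rw [if_neg hh]
          refine fZ_off ?_
          rintro l ⟨hc1, hc2⟩
          have hl : l = lr := Fin.succ_injective _ (hinj (by rw [hc2, hlr]))
          exact hh (by rw [← hc1, hl])
      rw [Finset.sum_congr rfl (fun h _ => hz h),
        Finset.sum_ite_eq' (inN Adj i) (γ lr.castSucc) (fun _ => (1:ℝ)), if_pos]
      exact Finset.mem_filter.2 ⟨Finset.mem_univ _, by rw [← hlr]; exact hstep lr⟩
    · rw [if_neg hex]
      refine Finset.sum_eq_zero (fun h _ => fZ_off ?_)
      rintro l ⟨-, hc2⟩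
      exact hex ⟨l, hc2⟩
  have hsucc_of_cast : ∀ {i : Fin m} {lr : Fin (n + 1)}, γ lr.castSucc = i → i ≠ s →
      ∃ w : Fin (n + 1), γ w.succ = i := by
    intro i lr h hi
    have hne0 : lr.castSucc ≠ (0 : Fin (n + 2)) := by
      intro h0'
      exact hi (by rw [← h, h0', h0])
    obtain ⟨w, hw⟩ := Fin.exists_succ_eq.2 hne0
    exact ⟨w, by rw [hw, h]⟩
  have hcast_of_succ : ∀ {i : Fin m} {lr : Fin (n + 1)}, γ lr.succ = i → i ≠ t →
      ∃ w : Fin (n + 1), γ w.castSucc = i := by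
    intro i lr h hi
    have hnl : lr.succ ≠ Fin.last (n + 1) := fun hl => hi (by rw [← h, hl, hlast])
    obtain ⟨w, hw⟩ := Fin.exists_castSucc_eq.2 hnl
    exact ⟨w, by rw [hw, h]⟩
  have hlamsum : ∀ i j, (∑ e ∈ ExtF i j, fLam n γ W i j e) = fZ n γ i j := by
    intro i j
    unfold fLam fZ
    rw [Finset.sum_comm]
    refine Finset.sum_congr rfl (fun l _ => ?_)
    by_cases hc : γ l.castSucc = i ∧ γ l.succ = j
    · obtain ⟨h1, h2⟩ := hc
      subst h1; subst h2
      simp only [and_self, if_pos]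
      exact hW2 l
    · rw [if_neg hc]
      exact Finset.sum_eq_zero (fun e _ => if_neg hc)
  have hlamnn : ∀ i j, ∀ e ∈ ExtF i j, 0 ≤ fLam n γ W i j e := by
    intro i j e he
    refine Finset.sum_nonneg (fun l _ => ?_)
    by_cases hc : γ l.castSucc = i ∧ γ l.succ = j
    · obtain ⟨h1, h2⟩ := hc
      subst h1; subst h2
      simp only [and_self, if_pos]
      exact hW1 l e he
    · rw [if_neg hc]
  refine ⟨fDv n γ W p Adj ExtF s t xs xt,
    fZ n γ, fLam n γ W,
    fun h i j => fZ n γ h i * fZ n γ i j,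
    fun h i j e => fLam n γ W h i e * fZ n γ i j,
    fun h i j e => fZ n γ h i * fLam n γ W i j e,
    ?_, ?_, ?_, ?_, ?_, ?_, ?_, ?_, ?_, ?_, ?_, ?_, ?_, ?_, ?_, ?_, ?_, ?_, ?_, ?_, ?_, ?_⟩
  · -- dv nonneg
    intro i
    unfold fDv
    split_ifs with h1 h2
    · exact Finset.sum_nonneg fun j _ => lpnorm_nonneg _ (hp s) _
    · exact Finset.sum_nonneg fun h _ => lpnorm_nonneg _ (hp t) _
    · exact Finset.sum_nonneg fun h _ =>
        Finset.sum_nonneg fun j _ => lpnorm_nonneg _ (hp i) _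
  · exact fun i j _ => fZ_01 hinj i j
  · exact fun i j _ => hlamnn i j
  · exact fun i _ _ h j _ _ => mul_nonneg (fZ_nonneg hinj h i) (fZ_nonneg hinj i j)
  · exact fun i _ _ h j _ _ e he => mul_nonneg (hlamnn h i e he) (fZ_nonneg hinj i j)
  · exact fun i _ _ h j _ _ e he => mul_nonneg (fZ_nonneg hinj h i) (hlamnn i j e he)
  · -- flow at s
    have h1 : (∑ j ∈ outN Adj s, fZ n γ s j) = 1 := by
      rw [houtsum s, if_pos ⟨0, by rw [Fin.castSucc_zero, h0]⟩]
    have h2 : (∑ h ∈ inN Adj s, fZ n γ h s) = 0 := by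
      rw [hinsum s, if_neg]
      rintro ⟨lr, hlr⟩
      exact Fin.succ_ne_zero lr (hinj (by rw [hlr, h0]))
    rw [h1, h2]; norm_num
  · -- flow at interior
    intro i his hit
    rw [houtsum i, hinsum i]
    by_cases hex : ∃ lr : Fin (n + 1), γ lr.succ = i
    · obtain ⟨lr, hlr⟩ := hex
      rw [if_pos (hcast_of_succ hlr hit), if_pos ⟨lr, hlr⟩]; norm_num
    · have hex2 : ¬ ∃ lr : Fin (n + 1), γ lr.castSucc = i := by
        rintro ⟨lr, hlr⟩
        exact hex (hsucc_of_cast hlr his)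
      rw [if_neg hex2, if_neg hex]; norm_num
  · -- flow at t
    have h1 : (∑ j ∈ outN Adj t, fZ n γ t j) = 0 := by
      rw [houtsum t, if_neg]
      rintro ⟨lr, hlr⟩
      exact absurd (hinj (by rw [hlr, hlast]))
        (ne_of_lt (Fin.castSucc_lt_last lr))
    have h2 : (∑ h ∈ inN Adj t, fZ n γ h t) = 1 := by
      rw [hinsum t, if_pos ⟨Fin.last n, by rw [Fin.succ_last, hlast]⟩]
    rw [h1, h2]; norm_num
  · intro i; rw [hinsum i]; split_ifs <;> norm_num
  · intro i; rw [houtsum i]; split_ifs <;> norm_num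
  · unfold fDv
    rw [if_pos rfl]
  · intro i his hit
    unfold fDv
    rw [if_neg his, if_neg hit]
  · unfold fDv
    rw [if_neg (Ne.symm hst), if_pos rfl]
  · exact fun i j _ => hlamsum i j
  · -- sum_j rho = z h i
    intro i his hit h hhi
    rw [← Finset.mul_sum, houtsum i]
    rcases fZ_cases hinj h i with ⟨h1, l, -, hl2⟩ | ⟨h1, -⟩
    · rw [h1, if_pos (hcast_of_succ hl2 hit)]; norm_num
    · rw [h1]; norm_num
  · -- sum_h rho = z i j
    intro i his hit j hij
    rw [← Finset.sum_mul, hinsum i]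
    rcases fZ_cases hinj i j with ⟨h1, l, hl1, -⟩ | ⟨h1, -⟩
    · rw [h1, if_pos (hsucc_of_cast hl1 his)]; norm_num
    · rw [h1]; norm_num
  · -- sum_e Phi = rho
    intro i his hit h j hhi hij
    rw [← Finset.sum_mul, hlamsum h i]
  · -- sum_j Phi = lam
    intro i his hit h hhi e he
    rw [← Finset.mul_sum, houtsum i]
    rcases fZ_cases hinj h i with ⟨h1, l, -, hl2⟩ | ⟨h1, -⟩
    · rw [if_pos (hcast_of_succ hl2 hit), mul_one]
    · rw [fLam_zero_of_fZ hinj h1 e]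
      simp
  · -- sum_e Psi = rho
    intro i his hit h j hhi hij
    rw [← Finset.mul_sum, hlamsum i j]
  · -- sum_h Psi = lam
    intro i his hit j hij e he
    rw [← Finset.sum_mul, hinsum i]
    rcases fZ_cases hinj i j with ⟨h1, l, hl1, -⟩ | ⟨h1, -⟩
    · rw [if_pos (hsucc_of_cast hl1 his), one_mul]
    · rw [fLam_zero_of_fZ hinj h1 e]
      simp
  · -- the value equation
    have hs0 : γ ((0 : Fin (n + 1)).castSucc) = s := by rw [Fin.castSucc_zero, h0]
    have hT : γ (Fin.last n).succ = t := by rw [Fin.succ_last, hlast]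
    have hDs : fDv n γ W p Adj ExtF s t xs xt s = lpnorm (p s) (y 0 - xs) := by
      unfold fDv
      rw [if_pos rfl]
      have hterm : ∀ j, lpnorm (p s) ((∑ e ∈ ExtF s j, fLam n γ W s j e • e) - fZ n γ s j • xs)
          = if j = γ (0 : Fin (n + 1)).succ then lpnorm (p s) (y 0 - xs) else 0 := by
        intro j
        by_cases hj : j = γ (0 : Fin (n + 1)).succ
        · rw [if_pos hj]
          subst hj
          have h1 : fZ n γ s (γ (0 : Fin (n + 1)).succ) = 1 := by
            have := fZ_arc hinj (0 : Fin (n + 1)); rwa [hs0] at this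
          have h2 : (∑ e ∈ ExtF s (γ (0 : Fin (n + 1)).succ),
              fLam n γ W s (γ (0 : Fin (n + 1)).succ) e • e) = y 0 := by
            have h2a : ∀ e, fLam n γ W s (γ (0 : Fin (n + 1)).succ) e = W 0 e := by
              intro e; have := fLam_arc (W := W) hinj (0 : Fin (n + 1)) e; rwa [hs0] at this
            have h2b := hW3 (0 : Fin (n + 1))
            rw [hs0] at h2b
            rw [Finset.sum_congr rfl (fun e _ => by rw [h2a e])]
            exact h2b
          rw [h1, h2, one_smul]
        · rw [if_neg hj]
          have hz : fZ n γ s j = 0 := by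
            refine fZ_off ?_
            rintro l ⟨hc1, hc2⟩
            have hl : l = 0 := Fin.castSucc_injective _ (hinj (by rw [hc1, hs0]))
            exact hj (by rw [← hc2, hl])
          have hlz : ∀ e ∈ ExtF s j, fLam n γ W s j e • e = 0 := fun e _ => by
            rw [fLam_zero_of_fZ hinj hz e, zero_smul]
          rw [Finset.sum_eq_zero hlz, hz, zero_smul, sub_zero]
          exact lpnorm_zero _ (hp s)
      rw [Finset.sum_congr rfl (fun j _ => hterm j),
        Finset.sum_ite_eq' (outN Adj s) (γ (0 : Fin (n + 1)).succ)
          (fun _ => lpnorm (p s) (y 0 - xs)), if_pos]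
      exact Finset.mem_filter.2 ⟨Finset.mem_univ _, by
        have := hstep (0 : Fin (n + 1)); rwa [hs0] at this⟩
    have hDt : fDv n γ W p Adj ExtF s t xs xt t = lpnorm (p t) (xt - y (Fin.last n)) := by
      unfold fDv
      rw [if_neg (Ne.symm hst), if_pos rfl]
      have hterm : ∀ h, lpnorm (p t) (fZ n γ h t • xt - ∑ e ∈ ExtF h t, fLam n γ W h t e • e)
          = if h = γ (Fin.last n).castSucc then lpnorm (p t) (xt - y (Fin.last n)) else 0 := by
        intro h
        by_cases hh : h = γ (Fin.last n).castSucc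
        · rw [if_pos hh]
          subst hh
          have h1 : fZ n γ (γ (Fin.last n).castSucc) t = 1 := by
            have := fZ_arc hinj (Fin.last n); rwa [hT] at this
          have h2 : (∑ e ∈ ExtF (γ (Fin.last n).castSucc) t,
              fLam n γ W (γ (Fin.last n).castSucc) t e • e) = y (Fin.last n) := by
            have h2a : ∀ e, fLam n γ W (γ (Fin.last n).castSucc) t e = W (Fin.last n) e := by
              intro e; have := fLam_arc (W := W) hinj (Fin.last n) e; rwa [hT] at this
            have h2b := hW3 (Fin.last n)
            rw [hT] at h2b
            rw [Finset.sum_congr rfl (fun e _ => by rw [h2a e])]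
            exact h2b
          rw [h1, h2, one_smul]
        · rw [if_neg hh]
          have hz : fZ n γ h t = 0 := by
            refine fZ_off ?_
            rintro l ⟨hc1, hc2⟩
            have hl : l = Fin.last n := Fin.succ_injective _ (hinj (by rw [hc2, hT]))
            exact hh (by rw [← hc1, hl])
          have hlz : ∀ e ∈ ExtF h t, fLam n γ W h t e • e = 0 := fun e _ => by
            rw [fLam_zero_of_fZ hinj hz e, zero_smul]
          rw [Finset.sum_eq_zero hlz, hz, zero_smul, sub_zero]
          exact lpnorm_zero _ (hp t)
      rw [Finset.sum_congr rfl (fun h _ => hterm h),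
        Finset.sum_ite_eq' (inN Adj t) (γ (Fin.last n).castSucc)
          (fun _ => lpnorm (p t) (xt - y (Fin.last n))), if_pos]
      exact Finset.mem_filter.2 ⟨Finset.mem_univ _, by
        have := hstep (Fin.last n); rwa [hT] at this⟩
    have hDmid : ∀ l : Fin n, fDv n γ W p Adj ExtF s t xs xt (γ l.succ.castSucc)
        = lpnorm (p (γ l.succ.castSucc)) (y l.succ - y l.castSucc) := by
      intro l
      have his : γ l.succ.castSucc ≠ s := by
        intro h
        have h2 := hinj (h.trans h0.symm)
        exact Fin.succ_ne_zero l (Fin.castSucc_eq_zero_iff.1 h2)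
      have hit : γ l.succ.castSucc ≠ t := by
        intro h
        have h2 := hinj (h.trans hlast.symm)
        exact absurd h2 (ne_of_lt (Fin.castSucc_lt_last l.succ))
      unfold fDv
      rw [if_neg his, if_neg hit]
      have hEi : γ ((l.castSucc : Fin (n + 1)).succ) = γ ((l.succ : Fin (n + 1)).castSucc) := by
        rw [Fin.succ_castSucc]
      have hz_in : fZ n γ (γ (l.castSucc : Fin (n + 1)).castSucc) (γ l.succ.castSucc) = 1 := by
        have := fZ_arc hinj (l.castSucc : Fin (n + 1)); rwa [hEi] at this
      have hz_out : fZ n γ (γ l.succ.castSucc) (γ (l.succ : Fin (n + 1)).succ) = 1 :=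
        fZ_arc hinj l.succ
      have hterm : ∀ h j,
          lpnorm (p (γ l.succ.castSucc))
            ((∑ e ∈ ExtF (γ l.succ.castSucc) j,
              (fZ n γ h (γ l.succ.castSucc) * fLam n γ W (γ l.succ.castSucc) j e) • e)
             - (∑ e ∈ ExtF h (γ l.succ.castSucc),
              (fLam n γ W h (γ l.succ.castSucc) e * fZ n γ (γ l.succ.castSucc) j) • e))
          = if h = γ (l.castSucc : Fin (n + 1)).castSucc then
              (if j = γ (l.succ : Fin (n + 1)).succ then
                lpnorm (p (γ l.succ.castSucc)) (y l.succ - y l.castSucc) else 0) else 0 := by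
        intro h j
        by_cases hh : h = γ (l.castSucc : Fin (n + 1)).castSucc
        · subst hh
          by_cases hj : j = γ (l.succ : Fin (n + 1)).succ
          · subst hj
            rw [if_pos rfl, if_pos rfl]
            have hlam_out : ∀ e, fLam n γ W (γ l.succ.castSucc) (γ (l.succ : Fin (n + 1)).succ) e
                = W l.succ e := fun e => fLam_arc (W := W) hinj l.succ e
            have hlam_in : ∀ e, fLam n γ W (γ (l.castSucc : Fin (n + 1)).castSucc)
                (γ l.succ.castSucc) e = W l.castSucc e := by
              intro e; have := fLam_arc (W := W) hinj (l.castSucc : Fin (n + 1)) e; rwa [hEi] at this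
            have hy_out : (∑ e ∈ ExtF (γ l.succ.castSucc) (γ (l.succ : Fin (n + 1)).succ),
                W l.succ e • e) = y l.succ := hW3 l.succ
            have hy_in : (∑ e ∈ ExtF (γ (l.castSucc : Fin (n + 1)).castSucc) (γ l.succ.castSucc),
                W l.castSucc e • e) = y l.castSucc := by
              have := hW3 (l.castSucc : Fin (n + 1)); rwa [hEi] at this
            have hS1 : (∑ e ∈ ExtF (γ l.succ.castSucc) (γ (l.succ : Fin (n + 1)).succ),
                (fZ n γ (γ (l.castSucc : Fin (n + 1)).castSucc) (γ l.succ.castSucc) *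
                  fLam n γ W (γ l.succ.castSucc) (γ (l.succ : Fin (n + 1)).succ) e) • e)
                = y l.succ := by
              rw [← hy_out]
              refine Finset.sum_congr rfl (fun e _ => ?_)
              rw [hz_in, hlam_out e, one_mul]
            have hS2 : (∑ e ∈ ExtF (γ (l.castSucc : Fin (n + 1)).castSucc) (γ l.succ.castSucc),
                (fLam n γ W (γ (l.castSucc : Fin (n + 1)).castSucc) (γ l.succ.castSucc) e *
                  fZ n γ (γ l.succ.castSucc) (γ (l.succ : Fin (n + 1)).succ)) • e)
                = y l.castSucc := by
              rw [← hy_in]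
              refine Finset.sum_congr rfl (fun e _ => ?_)
              rw [hlam_in e, hz_out, mul_one]
            rw [hS1, hS2]
          · rw [if_pos rfl, if_neg hj]
            have hzj : fZ n γ (γ l.succ.castSucc) j = 0 := by
              refine fZ_off ?_
              rintro l' ⟨hc1, hc2⟩
              have hl' : l' = l.succ := Fin.castSucc_injective _ (hinj hc1)
              exact hj (by rw [← hc2, hl'])
            have e1 : ∀ e ∈ ExtF (γ l.succ.castSucc) j,
                (fZ n γ (γ (l.castSucc : Fin (n + 1)).castSucc) (γ l.succ.castSucc) *
                  fLam n γ W (γ l.succ.castSucc) j e) • e = 0 := fun e _ => by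
              rw [fLam_zero_of_fZ hinj hzj e, mul_zero, zero_smul]
            have e2 : ∀ e ∈ ExtF (γ (l.castSucc : Fin (n + 1)).castSucc) (γ l.succ.castSucc),
                (fLam n γ W (γ (l.castSucc : Fin (n + 1)).castSucc) (γ l.succ.castSucc) e *
                  fZ n γ (γ l.succ.castSucc) j) • e = 0 := fun e _ => by
              rw [hzj, mul_zero, zero_smul]
            rw [Finset.sum_eq_zero e1, Finset.sum_eq_zero e2, sub_zero]
            exact lpnorm_zero _ (hp _)
        · rw [if_neg hh]
          have hzh : fZ n γ h (γ l.succ.castSucc) = 0 := by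
            refine fZ_off ?_
            rintro l' ⟨hc1, hc2⟩
            have hl' : l' = l.castSucc := Fin.succ_injective _ (hinj (hc2.trans hEi.symm))
            exact hh (by rw [← hc1, hl'])
          have e1 : ∀ e ∈ ExtF (γ l.succ.castSucc) j,
              (fZ n γ h (γ l.succ.castSucc) * fLam n γ W (γ l.succ.castSucc) j e) • e = 0 :=
            fun e _ => by rw [hzh, zero_mul, zero_smul]
          have e2 : ∀ e ∈ ExtF h (γ l.succ.castSucc),
              (fLam n γ W h (γ l.succ.castSucc) e * fZ n γ (γ l.succ.castSucc) j) • e = 0 :=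
            fun e _ => by rw [fLam_zero_of_fZ hinj hzh e, zero_mul, zero_smul]
          rw [Finset.sum_eq_zero e1, Finset.sum_eq_zero e2, sub_zero]
          exact lpnorm_zero _ (hp _)
      have hmemout : γ (l.succ : Fin (n + 1)).succ ∈ outN Adj (γ l.succ.castSucc) :=
        Finset.mem_filter.2 ⟨Finset.mem_univ _, hstep l.succ⟩
      have hmemin : γ (l.castSucc : Fin (n + 1)).castSucc ∈ inN Adj (γ l.succ.castSucc) :=
        Finset.mem_filter.2 ⟨Finset.mem_univ _, by
          have := hstep (l.castSucc : Fin (n + 1)); rwa [hEi] at this⟩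
      have hinner : ∀ h ∈ inN Adj (γ l.succ.castSucc),
          (∑ j ∈ outN Adj (γ l.succ.castSucc),
            lpnorm (p (γ l.succ.castSucc))
              ((∑ e ∈ ExtF (γ l.succ.castSucc) j,
                (fZ n γ h (γ l.succ.castSucc) * fLam n γ W (γ l.succ.castSucc) j e) • e)
               - (∑ e ∈ ExtF h (γ l.succ.castSucc),
                (fLam n γ W h (γ l.succ.castSucc) e * fZ n γ (γ l.succ.castSucc) j) • e)))
          = if h = γ (l.castSucc : Fin (n + 1)).castSucc then
              lpnorm (p (γ l.succ.castSucc)) (y l.succ - y l.castSucc) else 0 := by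
        intro h _
        rw [Finset.sum_congr rfl (fun j _ => hterm h j)]
        by_cases hh : h = γ (l.castSucc : Fin (n + 1)).castSucc
        · rw [if_pos hh]
          simp only [if_pos hh]
          rw [Finset.sum_ite_eq' (outN Adj (γ l.succ.castSucc)) (γ (l.succ : Fin (n + 1)).succ)
            (fun _ => lpnorm (p (γ l.succ.castSucc)) (y l.succ - y l.castSucc)), if_pos hmemout]
        · rw [if_neg hh]
          simp only [if_neg hh]
          exact Finset.sum_const_zero
      rw [Finset.sum_congr rfl hinner,
        Finset.sum_ite_eq' (inN Adj (γ l.succ.castSucc)) (γ (l.castSucc : Fin (n + 1)).castSucc)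
          (fun _ => lpnorm (p (γ l.succ.castSucc)) (y l.succ - y l.castSucc)), if_pos hmemin]
    have hDoff : ∀ i : Fin m, (∀ l : Fin (n + 2), γ l ≠ i) →
        fDv n γ W p Adj ExtF s t xs xt i = 0 := by
      intro i hirange
      have his : i ≠ s := fun h => hirange 0 (by rw [h0, h])
      have hit : i ≠ t := fun h => hirange (Fin.last (n + 1)) (by rw [hlast, h])
      unfold fDv
      rw [if_neg his, if_neg hit]
      refine Finset.sum_eq_zero (fun h _ => Finset.sum_eq_zero (fun j _ => ?_))
      have hzh : fZ n γ h i = 0 := fZ_off (by rintro l' ⟨-, hc2⟩; exact hirange l'.succ hc2)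
      have e1 : ∀ e ∈ ExtF i j, (fZ n γ h i * fLam n γ W i j e) • e = 0 := fun e _ => by
        rw [hzh, zero_mul, zero_smul]
      have e2 : ∀ e ∈ ExtF h i, (fLam n γ W h i e * fZ n γ i j) • e = 0 := fun e _ => by
        rw [fLam_zero_of_fZ hinj hzh e, zero_mul, zero_smul]
      rw [Finset.sum_eq_zero e1, Finset.sum_eq_zero e2, sub_zero]
      exact lpnorm_zero _ (hp i)
    have hre : (∑ i : Fin m, ω i * fDv n γ W p Adj ExtF s t xs xt i)
        = ∑ l : Fin (n + 2), ω (γ l) * fDv n γ W p Adj ExtF s t xs xt (γ l) := by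
      rw [← Finset.sum_subset (Finset.subset_univ (Finset.image γ Finset.univ))
        (fun i _ hni => by
          rw [hDoff i (fun l hl => hni (Finset.mem_image.2 ⟨l, Finset.mem_univ l, hl⟩)),
            mul_zero])]
      rw [Finset.sum_image (fun a _ b _ hab => hinj hab)]
    rw [hre, Fin.sum_univ_succ
        (fun l : Fin (n + 2) => ω (γ l) * fDv n γ W p Adj ExtF s t xs xt (γ l)),
      Fin.sum_univ_castSucc
        (fun l : Fin (n + 1) => ω (γ l.succ) * fDv n γ W p Adj ExtF s t xs xt (γ l.succ))]
    simp only [Fin.succ_castSucc]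
    rw [h0, Fin.succ_last, hlast, hDs, hDt]
    have hmidsum : (∑ l : Fin n, ω (γ l.succ.castSucc) *
        fDv n γ W p Adj ExtF s t xs xt (γ l.succ.castSucc))
        = ∑ l : Fin n, ω (γ l.succ.castSucc) *
            lpnorm (p (γ l.succ.castSucc)) (y l.succ - y l.castSucc) :=
      Finset.sum_congr rfl (fun l _ => by rw [hDmid l])
    rw [hmidsum]
    ring

lemma backward
    (hFpoly : ∀ i j, i ≠ j → P i ∩ P j = convexHull ℝ (ExtF i j : Set (Fin d → ℝ)))
    (hp : ∀ i, 1 ≤ p i) (hω : ∀ i, 0 < ω i)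
    (hAdj : ∀ i j, Adj i j ↔ i ≠ j ∧ (P i ∩ P j).Nonempty)
    (hst : s ≠ t) {r : ℝ}
    (hr : MIPFeas p ω ExtF Adj s t xs xt r) :
    ∃ r', PathFeas P p ω Adj s t xs xt r' ∧ r' ≤ r := by
  obtain ⟨dv, z, lam, ρ, Φ, Ψ, hdv, hz01, hlam0, hρ0, hΦ0, hΨ0, hfs, hfm, hft,
    hin1, hout1, hds, hdm, hdt, hls, hro, hri, hfe, hfj, hpe, hph, rfl⟩ := hr
  have hmemout : ∀ {i j : Fin m}, Adj i j → j ∈ outN Adj i :=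
    fun h => Finset.mem_filter.2 ⟨Finset.mem_univ _, h⟩
  have hmemin : ∀ {i j : Fin m}, Adj i j → i ∈ inN Adj j :=
    fun h => Finset.mem_filter.2 ⟨Finset.mem_univ _, h⟩
  have hz01out : ∀ i, ∀ j ∈ outN Adj i, z i j = 0 ∨ z i j = 1 :=
    fun i j hj => hz01 _ _ (Finset.mem_filter.1 hj).2
  have hz01in : ∀ i, ∀ h ∈ inN Adj i, z h i = 0 ∨ z h i = 1 :=
    fun i h hh => hz01 _ _ (Finset.mem_filter.1 hh).2
  -- no flow into s
  have hins0 : ∑ h ∈ inN Adj s, z h s = 0 := by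
    have h1 : ∑ h ∈ inN Adj s, z h s ≤ 0 := by
      have := hout1 s; linarith
    have h2 : 0 ≤ ∑ h ∈ inN Adj s, z h s :=
      Finset.sum_nonneg (sum01_nonneg (hz01in s))
    linarith
  have hzins : ∀ h, Adj h s → z h s = 0 := by
    intro h hA
    exact (Finset.sum_eq_zero_iff_of_nonneg (sum01_nonneg (hz01in s))).1 hins0 h (hmemin hA)
  have houts1 : ∑ j ∈ outN Adj s, z s j = 1 := by linarith [hfs, hins0]
  -- no flow out of t
  have houtt0 : ∑ j ∈ outN Adj t, z t j = 0 := by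
    have h1 : ∑ j ∈ outN Adj t, z t j ≤ 0 := by
      have := hin1 t; linarith
    have h2 : 0 ≤ ∑ j ∈ outN Adj t, z t j :=
      Finset.sum_nonneg (sum01_nonneg (hz01out t))
    linarith
  have hzoutt : ∀ j, Adj t j → z t j = 0 := by
    intro j hA
    exact (Finset.sum_eq_zero_iff_of_nonneg (sum01_nonneg (hz01out t))).1 houtt0 j (hmemout hA)
  -- the successor relation
  set N : Fin m → Fin m → Prop := fun i j => Adj i j ∧ z i j = 1 with hN
  have hNs : ∀ h, ¬ N h s := by
    rintro h ⟨hA, h1⟩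
    rw [hzins h hA] at h1; norm_num at h1
  have hsout : ∃ j, N s j := by
    obtain ⟨j, hj, hj1⟩ := sum01_exists_one (hz01out s) houts1
    exact ⟨j, (Finset.mem_filter.1 hj).2, hj1⟩
  have hout_unique : ∀ i j j', N i j → N i j' → j = j' := by
    rintro i j j' ⟨hA, h1⟩ ⟨hA', h1'⟩
    exact sum01_unique (hz01out i) (hout1 i) (hmemout hA) h1 (hmemout hA') h1'
  have hin_unique : ∀ h h' i, N h i → N h' i → h = h' := by
    rintro h h' i ⟨hA, h1⟩ ⟨hA', h1'⟩
    exact sum01_unique (hz01in i) (hin1 i) (hmemin hA) h1 (hmemin hA') h1'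
  have htout : ∀ j, ¬ N t j := by
    rintro j ⟨hA, h1⟩
    rw [hzoutt j hA] at h1; norm_num at h1
  have hmid : ∀ i, i ≠ s → i ≠ t → (∃ h, N h i) → ∃ j, N i j := by
    rintro i his hit ⟨h, hA, h1⟩
    have hin : ∑ h' ∈ inN Adj i, z h' i = 1 :=
      sum01_eq_one (hz01in i) (hin1 i) (hmemin hA) h1
    have hout : ∑ j ∈ outN Adj i, z i j = 1 := by
      have := hfm i his hit; linarith
    obtain ⟨j, hj, hj1⟩ := sum01_exists_one (hz01out i) hout
    exact ⟨j, (Finset.mem_filter.1 hj).2, hj1⟩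
  obtain ⟨n, γ, hγ0, hγlast, hγinj, hγstep⟩ :=
    path_exists N s t hst hNs hsout hout_unique hin_unique htout hmid
  have hA : ∀ l : Fin (n + 1), Adj (γ l.castSucc) (γ l.succ) := fun l => (hγstep l).1
  have hz1 : ∀ l : Fin (n + 1), z (γ l.castSucc) (γ l.succ) = 1 := fun l => (hγstep l).2
  have hne : ∀ l : Fin (n + 1), γ l.castSucc ≠ γ l.succ := fun l => ((hAdj _ _).1 (hA l)).1
  set Y : Fin (n + 1) → (Fin d → ℝ) := fun l =>
    ∑ e ∈ ExtF (γ l.castSucc) (γ l.succ), lam (γ l.castSucc) (γ l.succ) e • e with hY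
  have hlamsum1 : ∀ l : Fin (n + 1),
      ∑ e ∈ ExtF (γ l.castSucc) (γ l.succ), lam (γ l.castSucc) (γ l.succ) e = 1 := by
    intro l
    rw [hls _ _ (hA l), hz1 l]
  have hYmem : ∀ l : Fin (n + 1), Y l ∈ P (γ l.castSucc) ∩ P (γ l.succ) := by
    intro l
    rw [hFpoly _ _ (hne l)]
    refine Finset.mem_convexHull.2 ⟨lam (γ l.castSucc) (γ l.succ),
      hlam0 _ _ (hA l), hlamsum1 l, ?_⟩
    rw [Finset.centerMass_eq_of_sum_1 _ id (hlamsum1 l)]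
    simp [hY]
  refine ⟨ω s * lpnorm (p s) (Y 0 - xs)
      + (∑ l : Fin n, ω (γ l.succ.castSucc) *
          lpnorm (p (γ l.succ.castSucc)) (Y l.succ - Y l.castSucc))
      + ω t * lpnorm (p t) (xt - Y (Fin.last n)),
    ⟨n, γ, Y, hγ0, hγlast, hγinj, hA, hYmem, rfl⟩, ?_⟩
  -- now the bound
  have hs0 : γ ((0 : Fin (n + 1)).castSucc) = s := by rw [Fin.castSucc_zero, hγ0]
  have hT : γ (Fin.last n).succ = t := by rw [Fin.succ_last, hγlast]
  -- bound at s
  have hbS : lpnorm (p s) (Y 0 - xs) ≤ dv s := by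
    refine le_trans ?_ hds
    have hj0 : γ (0 : Fin (n + 1)).succ ∈ outN Adj s := by
      refine hmemout ?_
      have := hA 0; rwa [hs0] at this
    have heq : lpnorm (p s) ((∑ e ∈ ExtF s (γ (0 : Fin (n + 1)).succ),
          lam s (γ (0 : Fin (n + 1)).succ) e • e) - z s (γ (0 : Fin (n + 1)).succ) • xs)
        = lpnorm (p s) (Y 0 - xs) := by
      have hz' : z s (γ (0 : Fin (n + 1)).succ) = 1 := by
        have := hz1 0; rwa [hs0] at this
      have hY0 : Y 0 = ∑ e ∈ ExtF s (γ (0 : Fin (n + 1)).succ),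
          lam s (γ (0 : Fin (n + 1)).succ) e • e := by
        rw [hY]
        beta_reduce
        rw [hs0]
      rw [hz', one_smul, hY0]
    rw [← heq]
    exact Finset.single_le_sum
      (f := fun j => lpnorm (p s) ((∑ e ∈ ExtF s j, lam s j e • e) - z s j • xs))
      (fun j _ => lpnorm_nonneg _ (hp s) _) hj0
  -- bound at t
  have hbT : lpnorm (p t) (xt - Y (Fin.last n)) ≤ dv t := by
    refine le_trans ?_ hdt
    have hh0 : γ (Fin.last n).castSucc ∈ inN Adj t := by
      refine hmemin ?_
      have := hA (Fin.last n); rwa [hT] at this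
    have heq : lpnorm (p t) (z (γ (Fin.last n).castSucc) t • xt
          - ∑ e ∈ ExtF (γ (Fin.last n).castSucc) t, lam (γ (Fin.last n).castSucc) t e • e)
        = lpnorm (p t) (xt - Y (Fin.last n)) := by
      have hz' : z (γ (Fin.last n).castSucc) t = 1 := by
        have := hz1 (Fin.last n); rwa [hT] at this
      have hYl : Y (Fin.last n) = ∑ e ∈ ExtF (γ (Fin.last n).castSucc) t,
          lam (γ (Fin.last n).castSucc) t e • e := by
        rw [hY]
        beta_reduce
        rw [hT]
      rw [hz', one_smul, hYl]
    rw [← heq]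
    exact Finset.single_le_sum
      (f := fun h => lpnorm (p t) (z h t • xt - ∑ e ∈ ExtF h t, lam h t e • e))
      (fun h _ => lpnorm_nonneg _ (hp t) _) hh0
  -- bound at the interior vertices
  have hbM : ∀ l : Fin n,
      lpnorm (p (γ l.succ.castSucc)) (Y l.succ - Y l.castSucc) ≤ dv (γ l.succ.castSucc) := by
    intro l
    have his : γ l.succ.castSucc ≠ s := by
      intro h
      have h2 := hγinj (h.trans hγ0.symm)
      exact Fin.succ_ne_zero l (Fin.castSucc_eq_zero_iff.1 h2)
    have hit : γ l.succ.castSucc ≠ t := by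
      intro h
      have h2 := hγinj (h.trans hγlast.symm)
      exact absurd h2 (ne_of_lt (Fin.castSucc_lt_last l.succ))
    have hEi : γ ((l.castSucc : Fin (n + 1)).succ) = γ ((l.succ : Fin (n + 1)).castSucc) := by
      rw [Fin.succ_castSucc]
    refine le_trans ?_ (hdm _ his hit)
    have hAin : Adj (γ (l.castSucc : Fin (n + 1)).castSucc) (γ l.succ.castSucc) := by
      have := hA (l.castSucc : Fin (n + 1)); rwa [hEi] at this
    have hAout : Adj (γ l.succ.castSucc) (γ (l.succ : Fin (n + 1)).succ) := hA l.succ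
    have hzin1 : z (γ (l.castSucc : Fin (n + 1)).castSucc) (γ l.succ.castSucc) = 1 := by
      have := hz1 (l.castSucc : Fin (n + 1)); rwa [hEi] at this
    have hzout1 : z (γ l.succ.castSucc) (γ (l.succ : Fin (n + 1)).succ) = 1 := hz1 l.succ
    -- the total sum of the gate differences telescopes
    have hsum_eq : (∑ h ∈ inN Adj (γ l.succ.castSucc), ∑ j ∈ outN Adj (γ l.succ.castSucc),
        ((∑ e ∈ ExtF (γ l.succ.castSucc) j, Ψ h (γ l.succ.castSucc) j e • e) - (∑ e ∈ ExtF h (γ l.succ.castSucc), Φ h (γ l.succ.castSucc) j e • e)))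
        = Y l.succ - Y l.castSucc := by
      have hsplit : (∑ h ∈ inN Adj (γ l.succ.castSucc), ∑ j ∈ outN Adj (γ l.succ.castSucc),
          ((∑ e ∈ ExtF (γ l.succ.castSucc) j, Ψ h (γ l.succ.castSucc) j e • e) - (∑ e ∈ ExtF h (γ l.succ.castSucc), Φ h (γ l.succ.castSucc) j e • e)))
          = (∑ h ∈ inN Adj (γ l.succ.castSucc), ∑ j ∈ outN Adj (γ l.succ.castSucc), ∑ e ∈ ExtF (γ l.succ.castSucc) j, Ψ h (γ l.succ.castSucc) j e • e)
            - (∑ h ∈ inN Adj (γ l.succ.castSucc), ∑ j ∈ outN Adj (γ l.succ.castSucc), ∑ e ∈ ExtF h (γ l.succ.castSucc), Φ h (γ l.succ.castSucc) j e • e) := by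
        rw [← Finset.sum_sub_distrib]
        refine Finset.sum_congr rfl (fun h _ => ?_)
        rw [← Finset.sum_sub_distrib]
      have hPsi : (∑ h ∈ inN Adj (γ l.succ.castSucc), ∑ j ∈ outN Adj (γ l.succ.castSucc), ∑ e ∈ ExtF (γ l.succ.castSucc) j, Ψ h (γ l.succ.castSucc) j e • e)
          = Y l.succ := by
        rw [Finset.sum_comm]
        have hj' : ∀ j ∈ outN Adj (γ l.succ.castSucc),
            (∑ h ∈ inN Adj (γ l.succ.castSucc), ∑ e ∈ ExtF (γ l.succ.castSucc) j, Ψ h (γ l.succ.castSucc) j e • e)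
            = ∑ e ∈ ExtF (γ l.succ.castSucc) j, lam (γ l.succ.castSucc) j e • e := by
          intro j hj
          rw [Finset.sum_comm]
          refine Finset.sum_congr rfl (fun e he => ?_)
          rw [← Finset.sum_smul, hph (γ l.succ.castSucc) his hit j (Finset.mem_filter.1 hj).2 e he]
        rw [Finset.sum_congr rfl hj']
        -- only j = γ (l.succ).succ survives
        refine Eq.trans (Finset.sum_eq_single_of_mem (γ (l.succ : Fin (n + 1)).succ)
          (hmemout hAout) ?_) ?_
        · intro j hj hjne
          have hzj : z (γ l.succ.castSucc) j = 0 :=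
            sum01_others_zero (hz01out (γ l.succ.castSucc)) (hout1 (γ l.succ.castSucc)) (hmemout hAout) hzout1 j hj hjne
          have hlamz : ∀ e ∈ ExtF (γ l.succ.castSucc) j, lam (γ l.succ.castSucc) j e = 0 := by
            refine (Finset.sum_eq_zero_iff_of_nonneg
              (hlam0 (γ l.succ.castSucc) j (Finset.mem_filter.1 hj).2)).1 ?_
            rw [hls (γ l.succ.castSucc) j (Finset.mem_filter.1 hj).2, hzj]
          exact Finset.sum_eq_zero (fun e he => by rw [hlamz e he, zero_smul])
        · simp only [hY]
      have hPhi : (∑ h ∈ inN Adj (γ l.succ.castSucc), ∑ j ∈ outN Adj (γ l.succ.castSucc), ∑ e ∈ ExtF h (γ l.succ.castSucc), Φ h (γ l.succ.castSucc) j e • e)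
          = Y l.castSucc := by
        have hh' : ∀ h ∈ inN Adj (γ l.succ.castSucc),
            (∑ j ∈ outN Adj (γ l.succ.castSucc), ∑ e ∈ ExtF h (γ l.succ.castSucc), Φ h (γ l.succ.castSucc) j e • e)
            = ∑ e ∈ ExtF h (γ l.succ.castSucc), lam h (γ l.succ.castSucc) e • e := by
          intro h hh
          rw [Finset.sum_comm]
          refine Finset.sum_congr rfl (fun e he => ?_)
          rw [← Finset.sum_smul, hfj (γ l.succ.castSucc) his hit h (Finset.mem_filter.1 hh).2 e he]
        rw [Finset.sum_congr rfl hh']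
        refine Eq.trans (Finset.sum_eq_single_of_mem (γ (l.castSucc : Fin (n + 1)).castSucc)
          (hmemin hAin) ?_) ?_
        · intro h hh hhne
          have hzh : z h (γ l.succ.castSucc) = 0 :=
            sum01_others_zero (hz01in (γ l.succ.castSucc)) (hin1 (γ l.succ.castSucc)) (hmemin hAin) hzin1 h hh hhne
          have hlamz : ∀ e ∈ ExtF h (γ l.succ.castSucc), lam h (γ l.succ.castSucc) e = 0 := by
            refine (Finset.sum_eq_zero_iff_of_nonneg
              (hlam0 h (γ l.succ.castSucc) (Finset.mem_filter.1 hh).2)).1 ?_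
            rw [hls h (γ l.succ.castSucc) (Finset.mem_filter.1 hh).2, hzh]
          exact Finset.sum_eq_zero (fun e he => by rw [hlamz e he, zero_smul])
        · simp only [hY]
          rw [hEi]
      rw [hsplit, hPsi, hPhi]
    calc lpnorm (p (γ l.succ.castSucc)) (Y l.succ - Y l.castSucc)
        = lpnorm (p (γ l.succ.castSucc)) (∑ h ∈ inN Adj (γ l.succ.castSucc), ∑ j ∈ outN Adj (γ l.succ.castSucc),
            ((∑ e ∈ ExtF (γ l.succ.castSucc) j, Ψ h (γ l.succ.castSucc) j e • e) - (∑ e ∈ ExtF h (γ l.succ.castSucc), Φ h (γ l.succ.castSucc) j e • e))) := by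
          rw [hsum_eq]
      _ ≤ ∑ h ∈ inN Adj (γ l.succ.castSucc), lpnorm (p (γ l.succ.castSucc)) (∑ j ∈ outN Adj (γ l.succ.castSucc),
            ((∑ e ∈ ExtF (γ l.succ.castSucc) j, Ψ h (γ l.succ.castSucc) j e • e) - (∑ e ∈ ExtF h (γ l.succ.castSucc), Φ h (γ l.succ.castSucc) j e • e))) :=
          lpnorm_sum_le _ (hp (γ l.succ.castSucc)) _ _
      _ ≤ ∑ h ∈ inN Adj (γ l.succ.castSucc), ∑ j ∈ outN Adj (γ l.succ.castSucc), lpnorm (p (γ l.succ.castSucc))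
            ((∑ e ∈ ExtF (γ l.succ.castSucc) j, Ψ h (γ l.succ.castSucc) j e • e) - (∑ e ∈ ExtF h (γ l.succ.castSucc), Φ h (γ l.succ.castSucc) j e • e)) :=
          Finset.sum_le_sum (fun h _ => lpnorm_sum_le _ (hp (γ l.succ.castSucc)) _ _)
  -- assemble
  have hsub : (∑ l : Fin (n + 2), ω (γ l) * dv (γ l)) ≤ ∑ i : Fin m, ω i * dv i := by
    rw [← Finset.sum_image (g := γ) (f := fun i => ω i * dv i)
      (fun a _ b _ hab => hγinj hab)]
    exact Finset.sum_le_sum_of_subset_of_nonneg (Finset.subset_univ _)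
      (fun i _ _ => mul_nonneg (hω i).le (hdv i))
  refine le_trans ?_ hsub
  rw [Fin.sum_univ_succ (fun l : Fin (n + 2) => ω (γ l) * dv (γ l)),
    Fin.sum_univ_castSucc (fun l : Fin (n + 1) => ω (γ l.succ) * dv (γ l.succ))]
  simp only [Fin.succ_castSucc]
  rw [hγ0, Fin.succ_last, hγlast]
  have h1 : ω s * lpnorm (p s) (Y 0 - xs) ≤ ω s * dv s :=
    mul_le_mul_of_nonneg_left hbS (hω s).le
  have h2 : (∑ l : Fin n, ω (γ l.succ.castSucc) *
      lpnorm (p (γ l.succ.castSucc)) (Y l.succ - Y l.castSucc))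
      ≤ ∑ l : Fin n, ω (γ l.succ.castSucc) * dv (γ l.succ.castSucc) :=
    Finset.sum_le_sum (fun l _ => mul_le_mul_of_nonneg_left (hbM l) (hω _).le)
  have h3 : ω t * lpnorm (p t) (xt - Y (Fin.last n)) ≤ ω t * dv t :=
    mul_le_mul_of_nonneg_left hbT (hω t).le
  linarith

end Main
/-- Equivalence of Problem (SPP) and formulation (SPP-F2): the geodesic distance
`D(x_s,x_t)` (infimum over simple paths and gate points) equals the optimal value of
the mixed-integer program (SPP-F2). -/
theorem stmt_11 {d m : ℕ}
    (P : Fin m → Set (Fin d → ℝ))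
    (Ext : Fin m → Finset (Fin d → ℝ))
    (hExt : ∀ i, (Ext i : Set (Fin d → ℝ)) = Set.extremePoints ℝ (P i))
    (hP : ∀ i, P i = convexHull ℝ (Ext i : Set (Fin d → ℝ)))
    (hdisj : ∀ i j, i ≠ j → interior (P i) ∩ interior (P j) = ∅)
    (p : Fin m → ℝ≥0∞) (hp : ∀ i, 1 ≤ p i)
    (ω : Fin m → ℝ) (hω : ∀ i, 0 < ω i)
    (ExtF : Fin m → Fin m → Finset (Fin d → ℝ))
    (hExtF : ∀ i j, i ≠ j → (ExtF i j : Set (Fin d → ℝ)) = Set.extremePoints ℝ (P i ∩ P j))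
    (hFpoly : ∀ i j, i ≠ j → P i ∩ P j = convexHull ℝ (ExtF i j : Set (Fin d → ℝ)))
    (Adj : Fin m → Fin m → Prop)
    (hAdj : ∀ i j, Adj i j ↔ i ≠ j ∧ (P i ∩ P j).Nonempty)
    (s t : Fin m) (hst : s ≠ t)
    (xs xt : Fin d → ℝ) (hxs : xs ∈ P s) (hxt : xt ∈ P t) :
    sInf {r : ℝ | ∃ (n : ℕ) (γ : Fin (n + 2) → Fin m) (y : Fin (n + 1) → (Fin d → ℝ)),
        γ 0 = s ∧ γ (Fin.last (n + 1)) = t ∧ Function.Injective γ ∧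
        (∀ l : Fin (n + 1), Adj (γ l.castSucc) (γ l.succ)) ∧
        (∀ l : Fin (n + 1), y l ∈ P (γ l.castSucc) ∩ P (γ l.succ)) ∧
        r = ω s * lpnorm (p s) (y 0 - xs)
            + (∑ l : Fin n, ω (γ l.succ.castSucc) *
                lpnorm (p (γ l.succ.castSucc)) (y l.succ - y l.castSucc))
            + ω t * lpnorm (p t) (xt - y (Fin.last n))}
    = sInf {r : ℝ | ∃ (dv : Fin m → ℝ) (z : Fin m → Fin m → ℝ)
        (lam : Fin m → Fin m → (Fin d → ℝ) → ℝ)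
        (ρ : Fin m → Fin m → Fin m → ℝ)
        (Φ : Fin m → Fin m → Fin m → (Fin d → ℝ) → ℝ)
        (Ψ : Fin m → Fin m → Fin m → (Fin d → ℝ) → ℝ),
        (∀ i, 0 ≤ dv i) ∧
        (∀ i j, Adj i j → (z i j = 0 ∨ z i j = 1)) ∧
        (∀ i j, Adj i j → ∀ e ∈ ExtF i j, 0 ≤ lam i j e) ∧
        (∀ i, i ≠ s → i ≠ t → ∀ h j, Adj h i → Adj i j → 0 ≤ ρ h i j) ∧
        (∀ i, i ≠ s → i ≠ t → ∀ h j, Adj h i → Adj i j →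
          ∀ e ∈ ExtF h i, 0 ≤ Φ h i j e) ∧
        (∀ i, i ≠ s → i ≠ t → ∀ h j, Adj h i → Adj i j →
          ∀ e ∈ ExtF i j, 0 ≤ Ψ h i j e) ∧
        ((∑ j ∈ outN Adj s, z s j) - (∑ h ∈ inN Adj s, z h s) = 1) ∧
        (∀ i, i ≠ s → i ≠ t →
          (∑ j ∈ outN Adj i, z i j) - (∑ h ∈ inN Adj i, z h i) = 0) ∧
        ((∑ j ∈ outN Adj t, z t j) - (∑ h ∈ inN Adj t, z h t) = -1) ∧
        (∀ i, (∑ h ∈ inN Adj i, z h i) ≤ 1) ∧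
        (∀ i, (∑ j ∈ outN Adj i, z i j) ≤ 1) ∧
        ((∑ j ∈ outN Adj s,
            lpnorm (p s) ((∑ e ∈ ExtF s j, lam s j e • e) - z s j • xs)) ≤ dv s) ∧
        (∀ i, i ≠ s → i ≠ t →
          (∑ h ∈ inN Adj i, ∑ j ∈ outN Adj i,
            lpnorm (p i) ((∑ e ∈ ExtF i j, Ψ h i j e • e)
              - (∑ e ∈ ExtF h i, Φ h i j e • e))) ≤ dv i) ∧
        ((∑ h ∈ inN Adj t,
            lpnorm (p t) (z h t • xt - (∑ e ∈ ExtF h t, lam h t e • e))) ≤ dv t) ∧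
        (∀ i j, Adj i j → (∑ e ∈ ExtF i j, lam i j e) = z i j) ∧
        (∀ i, i ≠ s → i ≠ t → ∀ h, Adj h i →
          (∑ j ∈ outN Adj i, ρ h i j) = z h i) ∧
        (∀ i, i ≠ s → i ≠ t → ∀ j, Adj i j →
          (∑ h ∈ inN Adj i, ρ h i j) = z i j) ∧
        (∀ i, i ≠ s → i ≠ t → ∀ h j, Adj h i → Adj i j →
          (∑ e ∈ ExtF h i, Φ h i j e) = ρ h i j) ∧
        (∀ i, i ≠ s → i ≠ t → ∀ h, Adj h i → ∀ e ∈ ExtF h i,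
          (∑ j ∈ outN Adj i, Φ h i j e) = lam h i e) ∧
        (∀ i, i ≠ s → i ≠ t → ∀ h j, Adj h i → Adj i j →
          (∑ e ∈ ExtF i j, Ψ h i j e) = ρ h i j) ∧
        (∀ i, i ≠ s → i ≠ t → ∀ j, Adj i j → ∀ e ∈ ExtF i j,
          (∑ h ∈ inN Adj i, Ψ h i j e) = lam i j e) ∧
        r = ∑ i, ω i * dv i} := by
  show sInf {r : ℝ | PathFeas P p ω Adj s t xs xt r}
      = sInf {r : ℝ | MIPFeas p ω ExtF Adj s t xs xt r}
  exact sInf_eq_of_mutual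
    (fun r hr => pathFeas_nonneg hp hω hr)
    (fun r hr => mipFeas_nonneg hω hr)
    (fun r hr => ⟨r, forward hFpoly hp hω hAdj hst hr, le_refl r⟩)
    (fun r hr => by obtain ⟨r', h1, h2⟩ := backward hFpoly hp hω hAdj hst hr; exact ⟨r', h1, h2⟩)
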